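/- Let β₀ = 1 and β_n = Σ_{ℓ=0}^{n-1} binomial(n+ℓ, n-ℓ)·(2n/(n+ℓ))·β_ℓ for n ≥ 1. Then the series Σ_{n≥1} β_n^{-1/(2n)} diverges (Carleman's condition). -/

import Mathlib

/-- The sequence `β₀ = 1`, `β_n = Σ_{ℓ=0}^{n-1} C(n+ℓ, n-ℓ) · (2n/(n+ℓ)) · β_ℓ`. -/
def beta : ℕ → ℚ
  | 0 => 1
  | (n + 1) =>
      ∑ ℓ : Fin (n + 1),
        ((n + 1 + (ℓ : ℕ)).choose (n + 1 - (ℓ : ℕ)) : ℚ)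
          * (2 * (n + 1) / ((n : ℚ) + 1 + (ℓ : ℕ))) * beta (ℓ : ℕ)
  decreasing_by exact Nat.lt_succ_of_le (Nat.lt_succ_iff.mp ℓ.isLt)

lemma beta_pos : ∀ n, 0 < beta n := by
  intro n
  induction n using Nat.strong_induction_on with
  | _ n ih =>
    match n with
    | 0 => norm_num [beta]
    | (m + 1) =>
      rw [beta]
      apply Finset.sum_pos
      · intro ℓ _
        have h1 : (0:ℚ) < ((m + 1 + (ℓ : ℕ)).choose (m + 1 - (ℓ : ℕ)) : ℚ) := by
          exact_mod_cast Nat.choose_pos (by omega)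
        have h2 : (0:ℚ) < 2 * ((m:ℚ) + 1) / ((m : ℚ) + 1 + (ℓ : ℕ)) := by positivity
        exact mul_pos (mul_pos h1 h2) (ih ℓ (by omega))
      · exact Finset.univ_nonempty

/-- partial geometric-type sum bound -/
lemma partial_bound (x : ℚ) (hx : 1 ≤ x) (n : ℕ) : ∀ j, j ≤ n →
    (∑ ℓ ∈ Finset.range j, 2 * (2*x)^(n-ℓ) * (8*x)^ℓ)
      ≤ (2*x)^(n-j) * (8*x)^j := by
  have hx0 : (0:ℚ) < x := lt_of_lt_of_le one_pos hx
  intro j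
  induction j with
  | zero => intro _; simp; positivity
  | succ j ihj =>
    intro hj
    rw [Finset.sum_range_succ]
    have h1 := ihj (by omega)
    have hnj : n - j = (n - (j+1)) + 1 := by omega
    have hp : (0:ℚ) ≤ (2*x)^(n-(j+1)) := by positivity
    have hq : (0:ℚ) ≤ (8*x)^j := by positivity
    calc (∑ ℓ ∈ Finset.range j, 2 * (2*x)^(n-ℓ) * (8*x)^ℓ)
          + 2 * (2*x)^(n-j) * (8*x)^j
        ≤ (2*x)^(n-j) * (8*x)^j + 2 * (2*x)^(n-j) * (8*x)^j := by linarith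
      _ = 3 * ((2*x)^(n-(j+1)) * (2*x) * (8*x)^j) := by rw [hnj, pow_succ]; ring
      _ ≤ (2*x)^(n-(j+1)) * (8*x)^(j+1) := by
          rw [pow_succ]
          nlinarith [mul_nonneg (mul_nonneg hp hq) hx0.le]

lemma beta_le : ∀ n, 1 ≤ n → beta n ≤ ((8*n : ℚ))^n := by
  intro n
  induction n using Nat.strong_induction_on with
  | _ n ih =>
    match n with
    | 0 => omega
    | (m + 1) =>
      intro _
      have hm0 : (0:ℚ) ≤ (m:ℚ) := Nat.cast_nonneg m
      have hx1 : (1:ℚ) ≤ (m:ℚ) + 1 := by linarith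
      have hbound : ∀ ℓ : ℕ, ℓ < m + 1 → beta ℓ ≤ (8*((m:ℚ)+1))^ℓ := by
        intro ℓ hℓ
        match ℓ with
        | 0 => simp [beta]
        | (k+1) =>
          have h := ih (k+1) hℓ (by omega)
          push_cast at h
          calc beta (k+1) ≤ (8*((k:ℚ)+1))^(k+1) := h
            _ ≤ (8*((m:ℚ)+1))^(k+1) := by
                apply pow_le_pow_left₀ (by positivity)
                have : (k:ℚ) ≤ (m:ℚ) := by exact_mod_cast (show k ≤ m by omega)
                linarith
      rw [beta]
      have key : ∀ ℓ : Fin (m+1),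
          ((m + 1 + (ℓ : ℕ)).choose (m + 1 - (ℓ : ℕ)) : ℚ)
            * (2 * ((m:ℚ)+1) / ((m : ℚ) + 1 + (ℓ : ℕ))) * beta (ℓ : ℕ)
          ≤ 2 * (2*((m:ℚ)+1))^(m+1-(ℓ:ℕ)) * (8*((m:ℚ)+1))^(ℓ:ℕ) := by
        intro ℓ
        have hl0 : (0:ℚ) ≤ ((ℓ:ℕ):ℚ) := Nat.cast_nonneg _
        have hlm : ((ℓ:ℕ):ℚ) ≤ (m:ℚ) + 1 := by
          exact_mod_cast Nat.le_of_lt ℓ.isLt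
        have hc : ((m + 1 + (ℓ : ℕ)).choose (m + 1 - (ℓ : ℕ)) : ℚ)
            ≤ (2*((m:ℚ)+1))^(m+1-(ℓ:ℕ)) := by
          calc ((m + 1 + (ℓ : ℕ)).choose (m + 1 - (ℓ : ℕ)) : ℚ)
              ≤ (((m + 1 + (ℓ:ℕ))^(m+1-(ℓ:ℕ)) : ℕ) : ℚ) := by
                exact_mod_cast Nat.choose_le_pow _ _
            _ ≤ (2*((m:ℚ)+1))^(m+1-(ℓ:ℕ)) := by
                push_cast
                apply pow_le_pow_left₀ (by positivity)
                linarith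
        have hd : 2 * ((m:ℚ)+1) / ((m : ℚ) + 1 + (ℓ : ℕ)) ≤ 2 := by
          rw [div_le_iff₀ (by positivity)]
          linarith
        have hd0 : (0:ℚ) ≤ 2 * ((m:ℚ)+1) / ((m : ℚ) + 1 + (ℓ : ℕ)) := by positivity
        have hc0 : (0:ℚ) ≤ ((m + 1 + (ℓ : ℕ)).choose (m + 1 - (ℓ : ℕ)) : ℚ) := by positivity
        have hb := hbound (ℓ:ℕ) ℓ.isLt
        have hb0 : (0:ℚ) ≤ beta (ℓ:ℕ) := (beta_pos _).le
        calc ((m + 1 + (ℓ : ℕ)).choose (m + 1 - (ℓ : ℕ)) : ℚ)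
              * (2 * ((m:ℚ)+1) / ((m : ℚ) + 1 + (ℓ : ℕ))) * beta (ℓ : ℕ)
            ≤ (2*((m:ℚ)+1))^(m+1-(ℓ:ℕ)) * 2 * (8*((m:ℚ)+1))^(ℓ:ℕ) := by
              apply mul_le_mul _ hb hb0 (by positivity)
              exact mul_le_mul hc hd hd0 (by positivity)
          _ = 2 * (2*((m:ℚ)+1))^(m+1-(ℓ:ℕ)) * (8*((m:ℚ)+1))^(ℓ:ℕ) := by ring
      have hfinal : ((8*((m+1:ℕ)) : ℚ))^(m+1) = ((2*((m:ℚ)+1)))^(m+1-(m+1)) * (8*((m:ℚ)+1))^(m+1) := by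
        push_cast; simp
      calc (∑ ℓ : Fin (m+1), ((m + 1 + (ℓ : ℕ)).choose (m + 1 - (ℓ : ℕ)) : ℚ)
              * (2 * ((m:ℚ)+1) / ((m : ℚ) + 1 + (ℓ : ℕ))) * beta (ℓ : ℕ))
          ≤ ∑ ℓ : Fin (m+1), 2 * (2*((m:ℚ)+1))^(m+1-(ℓ:ℕ)) * (8*((m:ℚ)+1))^(ℓ:ℕ) :=
            Finset.sum_le_sum (fun ℓ _ => key ℓ)
        _ = ∑ ℓ ∈ Finset.range (m+1), 2 * (2*((m:ℚ)+1))^(m+1-ℓ) * (8*((m:ℚ)+1))^ℓ :=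
            Fin.sum_univ_eq_sum_range (fun ℓ => 2 * (2*((m:ℚ)+1))^(m+1-ℓ) * (8*((m:ℚ)+1))^ℓ) (m+1)
        _ ≤ (2*((m:ℚ)+1))^(m+1-(m+1)) * (8*((m:ℚ)+1))^(m+1) :=
            partial_bound ((m:ℚ)+1) hx1 (m+1) (m+1) le_rfl
        _ = ((8*((m+1:ℕ)) : ℚ))^(m+1) := hfinal.symm

/-- Carleman's condition: the series `Σ_{n ≥ 1} β_n^{-1/(2n)}` diverges. -/
theorem beta_carleman :
    ¬ Summable (fun n : ℕ => ((beta (n + 1) : ℝ)) ^ (-(1 : ℝ) / (2 * (n + 1)))) := by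
  intro hs
  have hterm : ∀ n : ℕ, (8 * ((n:ℝ) + 1))⁻¹ ≤ ((beta (n + 1) : ℝ)) ^ (-(1 : ℝ) / (2 * ((n:ℝ) + 1))) := by
    intro n
    set B : ℝ := 8 * ((n:ℝ) + 1) with hB
    have hB1 : (1:ℝ) ≤ B := by
      have : (0:ℝ) ≤ (n:ℝ) := Nat.cast_nonneg n
      rw [hB]; linarith
    have hB0 : (0:ℝ) < B := lt_of_lt_of_le one_pos hB1
    have hbp : (0:ℝ) < ((beta (n + 1) : ℚ) : ℝ) := by exact_mod_cast beta_pos (n+1)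
    have hble : ((beta (n + 1) : ℚ) : ℝ) ≤ B ^ (n+1) := by
      have h := beta_le (n+1) (by omega)
      calc ((beta (n+1) : ℚ) : ℝ) ≤ ((((8*(n+1) : ℚ))^(n+1) : ℚ) : ℝ) := by exact_mod_cast h
        _ = B ^ (n+1) := by push_cast [hB]; ring
    have he : -(1:ℝ) / (2 * ((n:ℝ) + 1)) ≤ 0 := by
      apply div_nonpos_of_nonpos_of_nonneg <;> [norm_num; positivity]
    have h1 : (B ^ (n+1)) ^ (-(1 : ℝ) / (2 * ((n:ℝ) + 1)))
        ≤ ((beta (n + 1) : ℝ)) ^ (-(1 : ℝ) / (2 * ((n:ℝ) + 1))) :=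
      Real.rpow_le_rpow_of_nonpos hbp hble he
    have h2 : (B ^ (n+1)) ^ (-(1 : ℝ) / (2 * ((n:ℝ) + 1))) = B ^ (-(1:ℝ)/2) := by
      rw [← Real.rpow_natCast B (n+1), ← Real.rpow_mul hB0.le]
      congr 1
      have hne : ((n:ℝ) + 1) ≠ 0 := by positivity
      push_cast
      field_simp
    have h3 : B⁻¹ ≤ B ^ (-(1:ℝ)/2) := by
      have := Real.rpow_le_rpow_of_exponent_le hB1 (show (-1:ℝ) ≤ -(1:ℝ)/2 by norm_num)
      rwa [Real.rpow_neg_one] at this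
    calc (8 * ((n:ℝ) + 1))⁻¹ = B⁻¹ := by rw [hB]
      _ ≤ B ^ (-(1:ℝ)/2) := h3
      _ = (B ^ (n+1)) ^ (-(1 : ℝ) / (2 * ((n:ℝ) + 1))) := h2.symm
      _ ≤ _ := h1
  have hg : Summable (fun n : ℕ => (8 * ((n:ℝ) + 1))⁻¹) :=
    Summable.of_nonneg_of_le (fun n => by positivity) hterm hs
  have hg' : Summable (fun n : ℕ => (((n:ℝ) + 1))⁻¹) := by
    have := hg.mul_left (8:ℝ)
    apply this.congr
    intro n
    have : ((n:ℝ) + 1) ≠ 0 := by positivity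
    field_simp
  have : Summable (fun n : ℕ => 1 / ((n:ℝ))) := by
    rw [← summable_nat_add_iff 1]
    apply hg'.congr
    intro n
    push_cast
    rw [one_div]
  exact Real.not_summable_one_div_natCast this
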